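/- Let P̃ be an irreducible stochastic matrix on a finite set 𝒱 with invariant probability vector π̃, and let W ⊆ 𝒱 be nonempty with W ≠ 𝒱. Let δ := min{ P̃_{wv} : w ∈ W, v ∈ 𝒱, P̃_{wv} > 0 }. Then the exit probability from W satisfies γ̃_W ≥ δ^{|W|} / |W|. -/

import Mathlib

open scoped Classical BigOperators
open Finset

variable {V : Type*}

/-- A (row-)stochastic matrix: nonnegative entries, rows summing to one. -/
def IsStochastic [Fintype V] (P : Matrix V V ℝ) : Prop :=
  (∀ u v, 0 ≤ P u v) ∧ ∀ u, ∑ v, P u v = 1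

/-- Irreducibility: the digraph with an edge `(u,v)` whenever `P u v > 0`
is strongly connected. -/
def IrreducibleMatrix [Fintype V] (P : Matrix V V ℝ) : Prop :=
  ∀ u v : V, Relation.ReflTransGen (fun a b => 0 < P a b) u v

/-- `p` is an invariant probability (row) vector of `P`. -/
def InvariantProb [Fintype V] (P : Matrix V V ℝ) (p : V → ℝ) : Prop :=
  (∀ v, 0 ≤ p v) ∧ (∑ v, p v = 1) ∧ ∀ v, ∑ u, p u * P u v = p v

/-- Total variation distance. -/
noncomputable def tvDist [Fintype V] (mu p : V → ℝ) : ℝ :=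
  (1 / 2) * ∑ v, |mu v - p v|

/-- The smallest positive solution of `x * log (e^2 / x) = 1`. -/
noncomputable def xstar : ℝ :=
  sInf {x : ℝ | 0 < x ∧ x * Real.log (Real.exp 2 / x) = 1}

/-- The function `Ψ`: `Ψ(x) = x log(e²/x)` for `x ≤ x*`, and `1` for `x > x*`
(note `Ψ(0) = 0` since `Real.log (e²/0) = Real.log 0 = 0`). -/
noncomputable def Psi (x : ℝ) : ℝ :=
  if x ≤ xstar then x * Real.log (Real.exp 2 / x) else 1

open Fin.NatCast in
/-- `phi P W w k` is the probability that a chain with transition matrix `P`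
started at `w` exits `W` exactly at time `k`: the sum over `(k+1)`-tuples
`ξ` with `ξ 0 = w`, `ξ l ∈ W` for `0 < l < k`, `ξ k ∉ W`, of `∏ P (ξ (l-1)) (ξ l)`. -/
noncomputable def phi [Fintype V] (P : Matrix V V ℝ) (W : Finset V) (w : V) (k : ℕ) : ℝ :=
  ∑ ξ ∈ Finset.univ.filter (fun ξ : Fin (k + 1) → V =>
      ξ 0 = w ∧ (∀ l : ℕ, 0 < l → l < k → ξ l ∈ W) ∧ ξ k ∉ W),
    ∏ l ∈ Finset.range k, P (ξ l) (ξ (l + 1))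

/-- `(1/t) * min_{w ∈ W, p w > 0} ∑_{k=1}^t phi w k` (the minimum over an empty
index set is taken to be `1`). -/
noncomputable def exitProbAux [Fintype V] (P : Matrix V V ℝ) (p : V → ℝ) (W : Finset V)
    (t : ℕ) : ℝ :=
  if h : (W.filter fun w => 0 < p w).Nonempty then
    (W.filter fun w => 0 < p w).inf' h
      (fun w => (1 / (t : ℝ)) * ∑ k ∈ Finset.Icc 1 t, phi P W w k)
  else 1

/-- The exit probability from `W`:
`sup_{t ≥ 1} min_{w ∈ W, p w > 0} (1/t) ∑_{k=1}^t phi w k`. -/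
noncomputable def exitProb [Fintype V] (P : Matrix V V ℝ) (p : V → ℝ) (W : Finset V) : ℝ :=
  sSup {x : ℝ | ∃ t : ℕ, 1 ≤ t ∧ x = exitProbAux P p W t}

/-- The entrance time `τ*_W := min_{u ∉ W} τ^u`. -/
noncomputable def entranceTime (tau : V → ℝ) (W : Finset V) : ℝ :=
  sInf {x : ℝ | ∃ u, u ∉ W ∧ x = tau u}

lemma phi_nonneg [Fintype V] (P : Matrix V V ℝ) (hP : IsStochastic P) (W : Finset V)
    (w : V) (k : ℕ) : 0 ≤ phi P W w k := by
  apply Finset.sum_nonneg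
  intro ξ _
  exact Finset.prod_nonneg fun l _ => hP.1 _ _

open Fin.NatCast in
lemma pow_le_phi [Fintype V] (P : Matrix V V ℝ) (hP : IsStochastic P) (W : Finset V)
    (w : V) (δ : ℝ) (hδ0 : 0 ≤ δ) (n : ℕ) (ξ : ℕ → V)
    (h0 : ξ 0 = w) (hW : ∀ l < n, ξ l ∈ W) (hn : ξ n ∉ W)
    (hedge : ∀ l < n, δ ≤ P (ξ l) (ξ (l+1))) :
    δ ^ n ≤ phi P W w n := by
  set ζ : Fin (n+1) → V := fun i => ξ i.val with hζ
  have hval : ∀ l : ℕ, l ≤ n → ζ (l : Fin (n+1)) = ξ l := by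
    intro l hl
    simp only [hζ, Fin.val_cast_of_lt (by omega : l < n + 1)]
  have hmem : ζ ∈ Finset.univ.filter (fun ξ' : Fin (n + 1) → V =>
      ξ' 0 = w ∧ (∀ l : ℕ, 0 < l → l < n → ξ' l ∈ W) ∧ ξ' n ∉ W) := by
    rw [Finset.mem_filter]
    refine ⟨Finset.mem_univ _, ?_, ?_, ?_⟩
    · show ξ (0 : Fin (n+1)).val = w
      simpa using h0
    · intro l hl0 hln
      rw [hval l (le_of_lt hln)]
      exact hW l hln
    · rw [hval n le_rfl]
      exact hn
  have hprod : δ ^ n ≤ ∏ l ∈ Finset.range n, P (ζ l) (ζ (l + 1)) := by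
    have : ∀ l ∈ Finset.range n, P (ζ l) (ζ (l + 1)) = P (ξ l) (ξ (l+1)) := by
      intro l hl
      have hln : l < n := Finset.mem_range.mp hl
      have h2 : ((l : Fin (n+1)) + 1) = ((l + 1 : ℕ) : Fin (n+1)) := by
        apply Fin.ext
        rw [Fin.val_add_one_of_lt, Fin.val_cast_of_lt (by omega), Fin.val_cast_of_lt (by omega)]
        rw [Fin.lt_iff_val_lt_val, Fin.val_last, Fin.val_cast_of_lt (by omega)]
        omega
      rw [hval l (by omega), h2, hval (l+1) (by omega)]
    rw [Finset.prod_congr rfl this]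
    calc δ ^ n = ∏ _l ∈ Finset.range n, δ := by rw [Finset.prod_const, Finset.card_range]
      _ ≤ _ := Finset.prod_le_prod (fun _ _ => hδ0)
          (fun l hl => hedge l (Finset.mem_range.mp hl))
  calc δ ^ n ≤ ∏ l ∈ Finset.range n, P (ζ l) (ζ (l + 1)) := hprod
    _ ≤ phi P W w n := by
      unfold phi
      exact Finset.single_le_sum
        (f := fun ξ' : Fin (n+1) → V => ∏ l ∈ Finset.range n, P (ξ' l) (ξ' (l + 1)))
        (fun ξ' _ => Finset.prod_nonneg fun l _ => hP.1 _ _) hmem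

open Fin.NatCast in
lemma sum_paths_eq_one [Fintype V] (P : Matrix V V ℝ) (hP : IsStochastic P) :
    ∀ (k : ℕ) (w : V),
      ∑ ξ ∈ Finset.univ.filter (fun ξ : Fin (k + 1) → V => ξ 0 = w),
        ∏ l ∈ Finset.range k, P (ξ l) (ξ (l + 1)) = 1 := by
  intro k
  induction k with
  | zero =>
    intro w
    have h : (Finset.univ.filter (fun ξ : Fin 1 → V => ξ 0 = w)) = {fun _ => w} := by
      ext ξ
      simp only [mem_filter, mem_univ, true_and, mem_singleton]
      constructor
      · intro h; funext i; have : i = 0 := Subsingleton.elim _ _; rw [this, h]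
      · intro h; rw [h]
    rw [h]; simp
  | succ k ih =>
    intro w
    have hcast : ∀ l : ℕ, l < k + 1 →
        ((l+1 : ℕ) : Fin (k+1+1)) = Fin.succ ((l : ℕ) : Fin (k+1)) := by
      intro l hl
      apply Fin.ext
      rw [Fin.val_succ, Fin.val_cast_of_lt (by omega), Fin.val_cast_of_lt (by omega)]
    have hadd : ∀ l : ℕ, l < k + 1 →
        ((l : Fin (k+1+1)) + 1) = Fin.succ ((l : ℕ) : Fin (k+1)) := by
      intro l hl
      apply Fin.ext
      rw [Fin.val_succ, Fin.val_add_one_of_lt, Fin.val_cast_of_lt (by omega),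
        Fin.val_cast_of_lt (by omega)]
      rw [Fin.lt_iff_val_lt_val, Fin.val_last, Fin.val_cast_of_lt (by omega)]
      omega
    have key : ∀ (a : V) (t : Fin (k+1) → V),
        ∏ l ∈ Finset.range (k+1),
            P ((Fin.cons a t : Fin (k+1+1) → V) l) ((Fin.cons a t : Fin (k+1+1) → V) (l + 1))
          = P a (t 0) * ∏ l ∈ Finset.range k, P (t l) (t (l + 1)) := by
      intro a t
      rw [Finset.prod_range_succ']
      rw [mul_comm]
      congr 1
      · apply Finset.prod_congr rfl
        intro l hl
        have hl' : l < k := Finset.mem_range.mp hl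
        rw [hadd (l+1) (by omega), Fin.cons_succ, hcast l (by omega), Fin.cons_succ,
          Nat.cast_add, Nat.cast_one]
    rw [Finset.sum_filter]
    rw [← Fintype.sum_equiv (Fin.consEquiv (fun _ : Fin (k+1+1) => V))
      (fun p => if p.1 = w then
        P p.1 (p.2 0) * ∏ l ∈ Finset.range k, P (p.2 l) (p.2 (l+1)) else 0)
      (fun ξ => if ξ 0 = w then ∏ l ∈ Finset.range (k+1), P (ξ l) (ξ (l+1)) else 0)
      (by
        intro p
        obtain ⟨a, t⟩ := p
        simp only [Fin.consEquiv_apply, Fin.cons_zero, key a t])]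
    rw [Fintype.sum_prod_type]
    rw [Finset.sum_eq_single_of_mem w (Finset.mem_univ w)
      (by intro a _ ha; simp [ha])]
    simp only [eq_self_iff_true, if_true]
    rw [← Finset.sum_fiberwise (Finset.univ : Finset (Fin (k+1) → V)) (fun t => t 0)
      (fun t => P w (t 0) * ∏ l ∈ Finset.range k, P (t l) (t (l+1)))]
    have hfib : ∀ u : V, ∑ t ∈ Finset.univ.filter (fun t : Fin (k+1) → V => t 0 = u),
        P w (t 0) * ∏ l ∈ Finset.range k, P (t l) (t (l+1)) = P w u := by
      intro u
      have h2 : ∀ t ∈ Finset.univ.filter (fun t : Fin (k+1) → V => t 0 = u),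
          P w (t 0) * ∏ l ∈ Finset.range k, P (t l) (t (l+1))
            = P w u * ∏ l ∈ Finset.range k, P (t l) (t (l+1)) := by
        intro t ht
        rw [(Finset.mem_filter.mp ht).2]
      rw [Finset.sum_congr rfl h2, ← Finset.mul_sum, ih u, mul_one]
    rw [Finset.sum_congr rfl (fun u _ => hfib u), hP.2 w]

lemma reflTransGen_to_walk (P : Matrix V V ℝ) {w v : V}
    (h : Relation.ReflTransGen (fun a b => 0 < P a b) w v) :
    ∃ m, ∃ x : ℕ → V, x 0 = w ∧ x m = v ∧ ∀ l < m, 0 < P (x l) (x (l+1)) := by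
  induction h with
  | refl => exact ⟨0, fun _ => w, rfl, rfl, by intro l hl; omega⟩
  | @tail b c hab hbc ih =>
    obtain ⟨m, x, h0, hm, hP⟩ := ih
    refine ⟨m + 1, fun l => if l ≤ m then x l else c, by simp [h0], by simp, ?_⟩
    intro l hl
    by_cases hlm : l < m
    · simp only [if_pos (le_of_lt hlm), if_pos (Nat.succ_le_of_lt hlm)]
      exact hP l hlm
    · have : l = m := by omega
      subst this
      simp only [le_refl, if_pos, if_neg (by omega : ¬ l + 1 ≤ l)]
      rw [hm]; exact hbc

lemma exists_short_exit_walk [Fintype V] (P : Matrix V V ℝ) (W : Finset V) (w : V)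
    (hw : w ∈ W) :
    ∀ m : ℕ, ∀ x : ℕ → V, x 0 = w → (∀ l < m, x l ∈ W) → x m ∉ W →
      (∀ l < m, 0 < P (x l) (x (l+1))) →
      ∃ n, 1 ≤ n ∧ n ≤ W.card ∧ ∃ ξ : ℕ → V, ξ 0 = w ∧ (∀ l < n, ξ l ∈ W) ∧ ξ n ∉ W ∧
        ∀ l < n, 0 < P (ξ l) (ξ (l+1)) := by
  intro m
  induction m using Nat.strong_induction_on with
  | _ m ihm =>
    intro x hx0 hxW hxm hxP
    have hm1 : 1 ≤ m := by
      rcases Nat.eq_zero_or_pos m with h | h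
      · exfalso; apply hxm; rw [h, hx0]; exact hw
      · exact h
    by_cases hc : m ≤ W.card
    · exact ⟨m, hm1, hc, x, hx0, hxW, hxm, hxP⟩
    · push_neg at hc
      have main : ∀ i j : ℕ, i < j → j < m → x i = x j →
          ∃ n, 1 ≤ n ∧ n ≤ W.card ∧ ∃ ξ : ℕ → V, ξ 0 = w ∧ (∀ l < n, ξ l ∈ W) ∧ ξ n ∉ W ∧
            ∀ l < n, 0 < P (ξ l) (ξ (l+1)) := by
        intro i j hij hjm hxij
        set d := j - i with hd
        have hd0 : 0 < d := by omega
        have hdm : d ≤ m := by omega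
        set m' := m - d with hm'
        have hm'lt : m' < m := by omega
        set y : ℕ → V := fun l => if l ≤ i then x l else x (l + d) with hy
        have hy0 : y 0 = w := by simp only [hy, if_pos (Nat.zero_le i)]; exact hx0
        have hyW : ∀ l < m', y l ∈ W := by
          intro l hl
          simp only [hy]
          split
          · exact hxW l (by omega)
          · exact hxW (l + d) (by omega)
        have hym : y m' ∉ W := by
          have h1 : ¬ (m' ≤ i) := by omega
          have h2 : m' + d = m := by omega
          simp only [hy, if_neg h1, h2]
          exact hxm
        have hyP : ∀ l < m', 0 < P (y l) (y (l+1)) := by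
          intro l hl
          rcases lt_trichotomy l i with h | h | h
          · simp only [hy, if_pos (le_of_lt h), if_pos (Nat.succ_le_of_lt h)]
            exact hxP l (by omega)
          · subst h
            have hji : l + 1 + d = j + 1 := by omega
            simp only [hy, if_pos (le_refl l), if_neg (by omega : ¬ l + 1 ≤ l), hji, hxij]
            exact hxP j hjm
          · simp only [hy, if_neg (by omega : ¬ l ≤ i), if_neg (by omega : ¬ l + 1 ≤ i)]
            have : l + 1 + d = l + d + 1 := by omega
            rw [this]
            exact hxP (l + d) (by omega)
        exact ihm m' hm'lt y hy0 hyW hym hyP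
      obtain ⟨i, hi, j, hj, hij, hxij⟩ :=
        Finset.exists_ne_map_eq_of_card_lt_of_maps_to
          (s := Finset.range m) (t := W) (by simpa using hc)
          (fun l hl => hxW l (Finset.mem_range.mp hl))
      rw [Finset.mem_range] at hi hj
      rcases lt_or_gt_of_ne hij with hlt | hgt
      · exact main i j hlt hj hxij
      · exact main j i hgt hi hxij.symm


lemma phi_le_one [Fintype V] (P : Matrix V V ℝ) (hP : IsStochastic P) (W : Finset V)
    (w : V) (k : ℕ) : phi P W w k ≤ 1 := by
  rw [← sum_paths_eq_one P hP k w]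
  unfold phi
  apply Finset.sum_le_sum_of_subset_of_nonneg
  · intro ξ h
    simp only [Finset.mem_filter] at h ⊢
    exact ⟨h.1, h.2.1⟩
  · intro ξ _ _
    exact Finset.prod_nonneg fun l _ => hP.1 _ _

lemma exitProbAux_le_one [Fintype V] (P : Matrix V V ℝ) (hP : IsStochastic P)
    (p : V → ℝ) (W : Finset V) (t : ℕ) (ht : 1 ≤ t) : exitProbAux P p W t ≤ 1 := by
  unfold exitProbAux
  split
  · rename_i h
    obtain ⟨a, ha⟩ := h
    refine le_trans (Finset.inf'_le _ ha) ?_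
    have hsum : ∑ k ∈ Finset.Icc 1 t, phi P W a k ≤ (t : ℝ) := by
      calc ∑ k ∈ Finset.Icc 1 t, phi P W a k ≤ ∑ _k ∈ Finset.Icc 1 t, (1 : ℝ) :=
            Finset.sum_le_sum fun k _ => phi_le_one P hP W a k
        _ = (t : ℝ) := by
            rw [Finset.sum_const, Nat.card_Icc, Nat.add_sub_cancel, nsmul_eq_mul, mul_one]
    have ht0 : (0 : ℝ) < t := by exact_mod_cast ht
    calc (1 / (t : ℝ)) * ∑ k ∈ Finset.Icc 1 t, phi P W a k
        ≤ (1 / (t : ℝ)) * t := by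
          apply mul_le_mul_of_nonneg_left hsum
          positivity
      _ = 1 := by field_simp
  · exact le_rfl

/-- for irreducible `Pt` and nonempty `W ≠ 𝒱`, with
`δ := min { Pt w v : w ∈ W, Pt w v > 0 }`, the exit probability satisfies
`γ̃_W ≥ δ^{|W|} / |W|`. -/
theorem stmt16 [Fintype V] (Pt : Matrix V V ℝ) (pit : V → ℝ) (W : Finset V)
    (hPt : IsStochastic Pt) (hirr : IrreducibleMatrix Pt) (hpit : InvariantProb Pt pit)
    (hW1 : W.Nonempty) (hW2 : W ≠ Finset.univ) :
    sInf {x : ℝ | ∃ w ∈ W, ∃ v : V, 0 < Pt w v ∧ x = Pt w v} ^ W.card / (W.card : ℝ)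
      ≤ exitProb Pt pit W := by
  set S := {x : ℝ | ∃ w ∈ W, ∃ v : V, 0 < Pt w v ∧ x = Pt w v} with hS
  set δ := sInf S with hδ
  -- basic facts about δ
  have hSne : S.Nonempty := by
    obtain ⟨w0, hw0⟩ := hW1
    have : ∃ v, 0 < Pt w0 v := by
      by_contra h
      push_neg at h
      have hz : ∑ v, Pt w0 v ≤ 0 := Finset.sum_nonpos fun v _ => h v
      rw [hPt.2 w0] at hz
      linarith
    obtain ⟨v, hv⟩ := this
    exact ⟨Pt w0 v, w0, hw0, v, hv, rfl⟩
  have hSfin : S.Finite := by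
    apply Set.Finite.subset (Set.finite_range (fun p : V × V => Pt p.1 p.2))
    rintro x ⟨w, _, v, _, hx⟩
    exact ⟨(w, v), hx.symm⟩
  have hbdd : BddBelow S := by
    refine ⟨0, ?_⟩
    rintro x ⟨w, _, v, _, hx⟩
    rw [hx]
    exact hPt.1 w v
  have hδmem : δ ∈ S := hSne.csInf_mem hSfin
  obtain ⟨w1, _, v1, hv1, hδeq⟩ := hδmem
  have hδ0 : 0 < δ := hδeq ▸ hv1
  have hδ1 : δ ≤ 1 := by
    rw [hδeq, ← hPt.2 w1]
    exact Finset.single_le_sum (fun v _ => hPt.1 w1 v) (Finset.mem_univ v1)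
  have hδle : ∀ a b : V, a ∈ W → 0 < Pt a b → δ ≤ Pt a b := fun a b ha hb =>
    csInf_le hbdd ⟨a, ha, b, hb, rfl⟩
  -- v0 outside W
  obtain ⟨v0, hv0⟩ : ∃ v, v ∉ W := by
    by_contra h
    push_neg at h
    exact hW2 (Finset.eq_univ_iff_forall.mpr h)
  set t := W.card with htdef
  have ht1 : 1 ≤ t := Finset.card_pos.mpr hW1
  have ht0 : (0 : ℝ) < t := by exact_mod_cast ht1
  -- key lower bound for each starting point in W
  have hkey : ∀ w ∈ W, δ ^ t ≤ ∑ k ∈ Finset.Icc 1 t, phi Pt W w k := by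
    intro w hw
    obtain ⟨m, x, hx0, hxm, hxP⟩ := reflTransGen_to_walk Pt (hirr w v0)
    have hex : ∃ l, x l ∉ W := ⟨m, hxm ▸ hv0⟩
    set m0 := Nat.find hex with hm0
    have hm0W : x m0 ∉ W := Nat.find_spec hex
    have hm0le : m0 ≤ m := Nat.find_min' hex (hxm ▸ hv0)
    have hm0int : ∀ l < m0, x l ∈ W := by
      intro l hl
      by_contra h
      exact absurd (Nat.find_min' hex h) (by omega)
    obtain ⟨n, hn1, hnt, ξ, hξ0, hξW, hξn, hξP⟩ :=
      exists_short_exit_walk Pt W w hw m0 x hx0 hm0int hm0W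
        (fun l hl => hxP l (by omega))
    have hedge : ∀ l < n, δ ≤ Pt (ξ l) (ξ (l+1)) := fun l hl =>
      hδle _ _ (hξW l hl) (hξP l hl)
    calc δ ^ t ≤ δ ^ n := pow_le_pow_of_le_one hδ0.le hδ1 hnt
      _ ≤ phi Pt W w n := pow_le_phi Pt hPt W w δ hδ0.le n ξ hξ0 hξW hξn hedge
      _ ≤ ∑ k ∈ Finset.Icc 1 t, phi Pt W w k := by
          apply Finset.single_le_sum (fun k _ => phi_nonneg Pt hPt W w k)
          rw [Finset.mem_Icc]
          exact ⟨hn1, hnt⟩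
  -- lower bound for exitProbAux at t
  have haux : δ ^ t / (t : ℝ) ≤ exitProbAux Pt pit W t := by
    unfold exitProbAux
    split
    · apply Finset.le_inf'
      intro w hwf
      have hw : w ∈ W := (Finset.mem_filter.mp hwf).1
      rw [div_eq_mul_one_div, mul_comm]
      exact mul_le_mul_of_nonneg_left (hkey w hw) (by positivity)
    · rw [div_le_one ht0]
      calc δ ^ t ≤ 1 := pow_le_one₀ hδ0.le hδ1
        _ ≤ (t : ℝ) := by exact_mod_cast ht1
  -- conclude via sSup
  have hmem : exitProbAux Pt pit W t ∈
      {x : ℝ | ∃ t' : ℕ, 1 ≤ t' ∧ x = exitProbAux Pt pit W t'} := ⟨t, ht1, rfl⟩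
  have hbdd' : BddAbove {x : ℝ | ∃ t' : ℕ, 1 ≤ t' ∧ x = exitProbAux Pt pit W t'} := by
    refine ⟨1, ?_⟩
    rintro x ⟨t', ht', hx⟩
    rw [hx]
    exact exitProbAux_le_one Pt hPt pit W t' ht'
  exact le_trans haux (le_trans (le_csSup hbdd' hmem) le_rfl)
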